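/- Let Z = {Z_1,...,Z_N} be variables partitioned into Π = {Z_1,...,Z_k} (blocks). Let P_1,...,P_m ∈ F_q[Z] be Π-multilinear polynomials (each monomial uses at most one variable from each block) with set-multilinear parts Q_1,...,Q_m (the homogeneous degree-k components, using exactly one variable from each block). Then Pr_{z ∼ F_q^N}[P_1(z)=0 ∧ ... ∧ P_m(z)=0] ≤ Pr_{z ∼ F_q^N}[Q_1(z)=0 ∧ ... ∧ Q_m(z)=0]. -/
import Mathlib


open MvPolynomial

namespace Stmt9Aux

variable {q N k : ℕ}

lemma exists_single {B : Finset (Fin N)} {mon : Fin N →₀ ℕ}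
    (h : ∑ j ∈ B, mon j = 1) :
    ∃ j0 ∈ B, mon j0 = 1 ∧ ∀ j ∈ B, j ≠ j0 → mon j = 0 := by
  obtain ⟨j0, hj0, hne⟩ : ∃ j0 ∈ B, mon j0 ≠ 0 := by
    by_contra hc
    push_neg at hc
    have : ∑ j ∈ B, mon j = 0 := Finset.sum_eq_zero hc
    omega
  have h1 : mon j0 + ∑ j ∈ B.erase j0, mon j = 1 := by
    rw [Finset.add_sum_erase B mon hj0]; exact h
  have hz : ∑ j ∈ B.erase j0, mon j = 0 := by omega
  refine ⟨j0, hj0, by omega, fun j hj hne' => ?_⟩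
  exact Finset.sum_eq_zero_iff.mp hz j (Finset.mem_erase.mpr ⟨hne', hj⟩)

lemma prod_pow_single {B : Finset (Fin N)} {mon : Fin N →₀ ℕ}
    {j0 : Fin N} (hj0 : j0 ∈ B) (h1 : mon j0 = 1)
    (h0 : ∀ j ∈ B, j ≠ j0 → mon j = 0) (f : Fin N → ZMod q) :
    ∏ j ∈ B, f j ^ mon j = f j0 := by
  rw [Finset.prod_eq_single_of_mem j0 hj0 (fun j hj hne => by rw [h0 j hj hne, pow_zero]),
    h1, pow_one]

lemma eval_key (π : Fin N → Fin k) (b : Fin k)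
    (P P' : MvPolynomial (Fin N) (ZMod q))
    (hm : ∀ mon ∈ P.support, ∑ j ∈ Finset.univ.filter (fun j => π j = b), mon j ≤ 1)
    (hP' : ∀ mon, P'.coeff mon =
      if ∑ j ∈ Finset.univ.filter (fun j => π j = b), mon j = 1 then P.coeff mon else 0)
    (z z0 : Fin N → ZMod q) (hoff : ∀ j, π j ≠ b → z j = z0 j) :
    eval (fun j => if π j = b then z j - z0 j else z j) P'
      = eval z P - eval z0 P := by
  classical
  set B := Finset.univ.filter (fun j => π j = b) with hB
  set φ : Fin N → ZMod q := fun j => if π j = b then z j - z0 j else z j with hφ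
  have hsub : P'.support ⊆ P.support := by
    intro d hd
    rw [mem_support_iff] at hd ⊢
    intro hc
    apply hd
    rw [hP']
    split <;> simp [hc]
  have e1 : eval φ P' = ∑ d ∈ P.support, P'.coeff d * ∏ i, φ i ^ d i := by
    rw [eval_eq']
    exact Finset.sum_subset hsub (fun d _ hd => by
      rw [notMem_support_iff.mp hd, zero_mul])
  rw [e1, eval_eq', eval_eq', ← Finset.sum_sub_distrib]
  apply Finset.sum_congr rfl
  intro d hd
  rw [← mul_sub]
  have hsplit : ∀ f : Fin N → ZMod q, (∏ i, f i ^ d i)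
      = (∏ i ∈ B, f i ^ d i) * ∏ i ∈ Finset.univ.filter (fun j => ¬ π j = b), f i ^ d i := by
    intro f
    rw [hB, Finset.prod_filter_mul_prod_filter_not]
  have hCeq : (∏ i ∈ Finset.univ.filter (fun j => ¬ π j = b), z i ^ d i)
      = ∏ i ∈ Finset.univ.filter (fun j => ¬ π j = b), z0 i ^ d i := by
    apply Finset.prod_congr rfl
    intro j hj
    rw [Finset.mem_filter] at hj
    rw [hoff j hj.2]
  have hφoff : (∏ i ∈ Finset.univ.filter (fun j => ¬ π j = b), φ i ^ d i)
      = ∏ i ∈ Finset.univ.filter (fun j => ¬ π j = b), z i ^ d i := by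
    apply Finset.prod_congr rfl
    intro j hj
    rw [Finset.mem_filter] at hj
    simp only [hφ, if_neg hj.2]
  rcases Nat.le_one_iff_eq_zero_or_eq_one.mp (hm d hd) with h0 | h1
  · have hc0 : P'.coeff d = 0 := by
      rw [hP', h0]
      simp
    rw [hc0, zero_mul]
    have hBz : ∀ f : Fin N → ZMod q, (∏ i ∈ B, f i ^ d i) = 1 := by
      intro f
      apply Finset.prod_eq_one
      intro j hj
      rw [Finset.sum_eq_zero_iff.mp h0 j hj, pow_zero]
    rw [hsplit z, hsplit z0, hBz, hBz, one_mul, one_mul, hCeq, sub_self, mul_zero]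
  · obtain ⟨j0, hj0, hm1, hm0⟩ := exists_single h1
    have hcoeff : P'.coeff d = P.coeff d := by rw [hP', if_pos h1]
    rw [hcoeff, hsplit z, hsplit z0, hsplit φ, hφoff, hCeq,
      prod_pow_single hj0 hm1 hm0, prod_pow_single hj0 hm1 hm0,
      prod_pow_single hj0 hm1 hm0]
    have hπj0 : π j0 = b := by
      have := Finset.mem_filter.mp (hB ▸ hj0)
      exact this.2
    simp only [hφ, if_pos hπj0]
    ring

lemma card_step [NeZero q] {m : ℕ} (π : Fin N → Fin k) (b : Fin k)
    (P P' : Fin m → MvPolynomial (Fin N) (ZMod q))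
    (hm : ∀ i, ∀ mon ∈ (P i).support,
      ∑ j ∈ Finset.univ.filter (fun j => π j = b), mon j ≤ 1)
    (hP' : ∀ i mon, (P' i).coeff mon =
      if ∑ j ∈ Finset.univ.filter (fun j => π j = b), mon j = 1
        then (P i).coeff mon else 0) :
    Nat.card {z : Fin N → ZMod q // ∀ i, eval z (P i) = 0}
      ≤ Nat.card {z : Fin N → ZMod q // ∀ i, eval z (P' i) = 0} := by
  classical
  set r : (Fin N → ZMod q) → (Fin N → ZMod q) :=
    fun z j => if π j = b then 0 else z j with hr
  set pick : (Fin N → ZMod q) → (Fin N → ZMod q) :=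
    fun w => if h : ∃ y, (∀ i, eval y (P i) = 0) ∧ r y = w then h.choose else 0 with hpick
  have hpick_spec : ∀ z : Fin N → ZMod q, (∀ i, eval z (P i) = 0) →
      (∀ i, eval (pick (r z)) (P i) = 0) ∧ r (pick (r z)) = r z := by
    intro z hz
    have hex : ∃ y, (∀ i, eval y (P i) = 0) ∧ r y = r z := ⟨z, hz, rfl⟩
    simp only [hpick, dif_pos hex]
    exact hex.choose_spec
  have hF : ∀ z : Fin N → ZMod q, (∀ i, eval z (P i) = 0) →
      ∀ i, eval (fun j => if π j = b then z j - pick (r z) j else z j) (P' i) = 0 := by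
    intro z hz i
    obtain ⟨hz0, hrz0⟩ := hpick_spec z hz
    have hoff : ∀ j, π j ≠ b → z j = pick (r z) j := by
      intro j hj
      have h := congrFun hrz0 j
      simp only [hr, if_neg hj] at h
      exact h.symm
    rw [eval_key π b (P i) (P' i) (hm i) (hP' i) z (pick (r z)) hoff, hz i, hz0 i, sub_zero]
  refine Nat.card_le_card_of_injective
    (fun zs : {z : Fin N → ZMod q // ∀ i, eval z (P i) = 0} =>
      (⟨fun j => if π j = b then zs.1 j - pick (r zs.1) j else zs.1 j, hF zs.1 zs.2⟩ :
        {z : Fin N → ZMod q // ∀ i, eval z (P' i) = 0})) ?_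
  rintro ⟨z, hz⟩ ⟨z', hz'⟩ heq
  simp only [Subtype.mk.injEq] at heq
  have heqf := fun j => congrFun heq j
  have hoffeq : ∀ j, π j ≠ b → z j = z' j := by
    intro j hj
    have h := heqf j
    simpa only [if_neg hj] using h
  have hreq : r z = r z' := by
    funext j
    by_cases hj : π j = b
    · simp [hr, hj]
    · simp [hr, hj, hoffeq j hj]
  apply Subtype.ext
  funext j
  by_cases hj : π j = b
  · have h := heqf j
    rw [if_pos hj, if_pos hj, hreq] at h
    exact sub_left_inj.mp h
  · exact hoffeq j hj

noncomputable def restrict (cond : (Fin N →₀ ℕ) → Prop) [DecidablePred cond]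
    (P : MvPolynomial (Fin N) (ZMod q)) : MvPolynomial (Fin N) (ZMod q) :=
  ∑ mon ∈ P.support, if cond mon then monomial mon (P.coeff mon) else 0

lemma coeff_restrict (cond : (Fin N →₀ ℕ) → Prop) [DecidablePred cond]
    (P : MvPolynomial (Fin N) (ZMod q)) (m : Fin N →₀ ℕ) :
    (restrict cond P).coeff m = if cond m then P.coeff m else 0 := by
  classical
  rw [restrict, coeff_sum]
  rw [Finset.sum_eq_single m ?h1 ?h2]
  · split_ifs with h
    · rw [coeff_monomial, if_pos rfl]
    · exact coeff_zero m
  case h1 =>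
    intro mon _ hne
    split_ifs with h
    · rw [coeff_monomial, if_neg hne]
    · exact coeff_zero m
  case h2 =>
    intro hm
    split_ifs with h
    · rw [coeff_monomial, if_pos rfl, notMem_support_iff.mp hm]
    · exact coeff_zero m

end Stmt9Aux

theorem stmt9 (q N k m : ℕ) (hq : IsPrimePow q) (π : Fin N → Fin k)
    (P Q : Fin m → MvPolynomial (Fin N) (ZMod q))
    (hmult : ∀ i, ∀ mon ∈ (P i).support, ∀ b : Fin k,
      ∑ j ∈ Finset.univ.filter (fun j => π j = b), mon j ≤ 1)
    (hQ : ∀ i mon, (Q i).coeff mon =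
      if ∀ b : Fin k, ∑ j ∈ Finset.univ.filter (fun j => π j = b), mon j = 1
        then (P i).coeff mon else 0) :
    Nat.card {z : Fin N → ZMod q // ∀ i, eval z (P i) = 0}
      ≤ Nat.card {z : Fin N → ZMod q // ∀ i, eval z (Q i) = 0} := by
  classical
  haveI : NeZero q := ⟨hq.pos.ne'⟩
  set cond : ℕ → (Fin N →₀ ℕ) → Prop :=
    fun t mon => ∀ b : Fin k, (b : ℕ) < t →
      ∑ j ∈ Finset.univ.filter (fun j => π j = b), mon j = 1 with hcond
  set R : ℕ → Fin m → MvPolynomial (Fin N) (ZMod q) :=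
    fun t i => Stmt9Aux.restrict (cond t) (P i) with hR
  have hcoeffR : ∀ t i mon, (R t i).coeff mon = if cond t mon then (P i).coeff mon else 0 :=
    fun t i mon => Stmt9Aux.coeff_restrict _ _ _
  have hsupR : ∀ t i, (R t i).support ⊆ (P i).support := by
    intro t i d hd
    rw [mem_support_iff] at hd ⊢
    intro hc; apply hd; rw [hcoeffR]
    split_ifs <;> simp [hc]
  have hR0 : ∀ i, R 0 i = P i := by
    intro i; ext mon
    rw [hcoeffR, if_pos (fun b hb => absurd hb (Nat.not_lt_zero _))]
  have hRk : ∀ i, R k i = Q i := by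
    intro i; ext mon
    rw [hcoeffR, hQ]
    by_cases h : ∀ b : Fin k, ∑ j ∈ Finset.univ.filter (fun j => π j = b), mon j = 1
    · rw [if_pos (fun b _ => h b), if_pos h]
    · rw [if_neg (fun hc => h (fun b => hc b b.isLt)), if_neg h]
  have hstep : ∀ t, t < k →
      Nat.card {z : Fin N → ZMod q // ∀ i, eval z (R t i) = 0}
        ≤ Nat.card {z : Fin N → ZMod q // ∀ i, eval z (R (t+1) i) = 0} := by
    intro t ht
    refine Stmt9Aux.card_step π ⟨t, ht⟩ (R t) (R (t+1)) ?_ ?_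
    · intro i mon hmon
      exact hmult i mon (hsupR t i hmon) ⟨t, ht⟩
    · intro i mon
      rw [hcoeffR, hcoeffR]
      by_cases h1 : ∑ j ∈ Finset.univ.filter (fun j => π j = (⟨t, ht⟩ : Fin k)), mon j = 1
      · rw [if_pos h1]
        by_cases h2 : cond t mon
        · rw [if_pos h2, if_pos ?_]
          intro b hb
          rcases Nat.lt_succ_iff_lt_or_eq.mp hb with h | h
          · exact h2 b h
          · have hbe : b = (⟨t, ht⟩ : Fin k) := Fin.ext h
            rw [hbe]; exact h1
        · rw [if_neg h2, if_neg (fun hc => h2 (fun b hb => hc b (Nat.lt_succ_of_lt hb)))]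
      · rw [if_neg h1, if_neg]
        intro hc
        exact h1 (hc ⟨t, ht⟩ (Nat.lt_succ_self t))
  have hchain : ∀ t, t ≤ k →
      Nat.card {z : Fin N → ZMod q // ∀ i, eval z (P i) = 0}
        ≤ Nat.card {z : Fin N → ZMod q // ∀ i, eval z (R t i) = 0} := by
    intro t
    induction t with
    | zero =>
      intro _
      simp only [hR0]
      exact le_rfl
    | succ t ih =>
      intro ht
      exact (ih (Nat.le_of_succ_le ht)).trans (hstep t ht)
  have hfin := hchain k le_rfl
  simpa only [hRk] using hfin
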